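/- Every maximum matching of a unicycle graph whose unique cycle has odd length is uniquely restricted. -/

import Mathlib

open Finset

variable {V : Type*}

/-- A stable (independent) set of vertices. -/
def StableSet (G : SimpleGraph V) (S : Finset V) : Prop :=
  ∀ x ∈ S, ∀ y ∈ S, ¬ G.Adj x y

/-- The closed neighborhood N[S] of a finite vertex set. -/
def closedNbhd [Fintype V] [DecidableEq V] (G : SimpleGraph V) [DecidableRel G.Adj]
    (S : Finset V) : Finset V :=
  S ∪ Finset.univ.filter (fun v => ∃ s ∈ S, G.Adj v s)

/-- Ψ(G): the family of local maximum stable sets of `G`: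
stable sets `S` that are maximum stable sets of the subgraph induced by `N[S]`. -/
def Psi [Fintype V] [DecidableEq V] (G : SimpleGraph V) [DecidableRel G.Adj] :
    Set (Finset V) :=
  {S | StableSet G S ∧
    ∀ T : Finset V, T ⊆ closedNbhd G S → StableSet G T → T.card ≤ S.card}

/-- A maximum stable set of `G`. -/
def MaximumStable (G : SimpleGraph V) (S : Finset V) : Prop :=
  StableSet G S ∧ ∀ T : Finset V, StableSet G T → T.card ≤ S.card

/-- The accessibility property of a set system. -/
def Accessible [DecidableEq V] (F : Set (Finset V)) : Prop :=
  ∀ X ∈ F, X.Nonempty → ∃ x ∈ X, X.erase x ∈ F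

/-- The exchange property of a set system. -/
def ExchangeProp [DecidableEq V] (F : Set (Finset V)) : Prop :=
  ∀ X ∈ F, ∀ Y ∈ F, X.card = Y.card + 1 → ∃ x ∈ X, x ∉ Y ∧ insert x Y ∈ F

/-- A greedoid: a nonempty set system satisfying accessibility and exchange. -/
def IsGreedoid [DecidableEq V] (F : Set (Finset V)) : Prop :=
  F.Nonempty ∧ Accessible F ∧ ExchangeProp F

/-- An accessibility chain for `S`: sets `f 1 ⊆ f 2 ⊆ ... ⊆ f |S| = S`,
with `|f j| = j` and each `f j ∈ Ψ(G)`. -/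
def HasAccessChain [Fintype V] [DecidableEq V] (G : SimpleGraph V) [DecidableRel G.Adj]
    (S : Finset V) : Prop :=
  ∃ f : ℕ → Finset V, f S.card = S ∧
    (∀ j, 1 ≤ j → j ≤ S.card → (f j).card = j ∧ f j ∈ Psi G) ∧
    (∀ j, 1 ≤ j → j < S.card → f j ⊆ f (j + 1))

/-- A matching `M` is uniquely restricted if it is the unique perfect matching of the
subgraph induced by the set of vertices it saturates. -/
def UniquelyRestricted (G : SimpleGraph V) (M : G.Subgraph) : Prop :=
  M.IsMatching ∧ ∀ M' : G.Subgraph, M'.IsMatching → M'.support = M.support →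
    M'.edgeSet = M.edgeSet

/-- A maximum matching: a matching of maximum cardinality. -/
def MaximumMatching (G : SimpleGraph V) (M : G.Subgraph) : Prop :=
  M.IsMatching ∧ ∀ M' : G.Subgraph, M'.IsMatching → M'.edgeSet.ncard ≤ M.edgeSet.ncard

/-- A cycle `c` is alternating with respect to the matching `M` if of any two incident
edges of `c` exactly one belongs to `M`. -/
def AlternatingCycle (G : SimpleGraph V) (M : G.Subgraph) {v : V} (c : G.Walk v v) : Prop :=
  c.IsCycle ∧ ∀ i : Fin c.edges.length,
    (c.edges.get i ∈ M.edgeSet ↔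
      c.edges.get ⟨(i.1 + 1) % c.edges.length,
        Nat.mod_lt _ (lt_of_le_of_lt (Nat.zero_le _) i.2)⟩ ∉ M.edgeSet)

/-- A unicyclic graph: it has a cycle, and all of its cycles have the same edge set. -/
def Unicyclic [DecidableEq V] (G : SimpleGraph V) : Prop :=
  (∃ (v : V) (c : G.Walk v v), c.IsCycle) ∧
  ∀ ⦃v : V⦄ (c : G.Walk v v) ⦃w : V⦄ (d : G.Walk w w), c.IsCycle → d.IsCycle →
    c.edges.toFinset = d.edges.toFinset

/-- The stability number α(G). -/
noncomputable def alphaNum (G : SimpleGraph V) : ℕ :=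
  sSup {n | ∃ S : Finset V, StableSet G S ∧ S.card = n}

/-- The matching number μ(G). -/
noncomputable def muNum (G : SimpleGraph V) : ℕ :=
  sSup {n | ∃ M : G.Subgraph, M.IsMatching ∧ M.edgeSet.ncard = n}

/-- A König–Egerváry graph: α(G) + μ(G) = |V(G)|. -/
def KonigEgervary (G : SimpleGraph V) [Fintype V] : Prop :=
  alphaNum G + muNum G = Fintype.card V




section URAux

open SimpleGraph

variable {G : SimpleGraph V}

open Classical in
/-- The partner of a vertex in a subgraph (junk value if none). -/
noncomputable def URpartner (M : G.Subgraph) (v : V) : V :=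
  if h : ∃ w, M.Adj v w then h.choose else v

lemma URpartner_adj {M : G.Subgraph} {v : V} (h : v ∈ M.support) :
    M.Adj v (URpartner M v) := by
  rw [SimpleGraph.Subgraph.mem_support] at h
  rw [URpartner]
  rw [dif_pos h]
  exact h.choose_spec

/-- The alternating sequence starting with an `M`-edge `(a, b)`. -/
noncomputable def URseq (M M' : G.Subgraph) (a b : V) : ℕ → V
  | 0 => a
  | 1 => b
  | (n+2) => if Even n then URpartner M' (URseq M M' a b (n+1))
             else URpartner M (URseq M M' a b (n+1))

lemma URseq_add_two (M M' : G.Subgraph) (a b : V) (n : ℕ) :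
    URseq M M' a b (n+2) = if Even n then URpartner M' (URseq M M' a b (n+1))
             else URpartner M (URseq M M' a b (n+1)) := rfl

/-- The walk along a sequence of adjacent vertices. -/
def URwalk (G : SimpleGraph V) (x : ℕ → V) (hx : ∀ n, G.Adj (x n) (x (n+1))) :
    (n : ℕ) → G.Walk (x 0) (x n)
  | 0 => Walk.nil
  | (n+1) => (URwalk G x hx n).concat (hx n)

lemma URwalk_length (G : SimpleGraph V) (x : ℕ → V) (hx : ∀ n, G.Adj (x n) (x (n+1)))
    (n : ℕ) : (URwalk G x hx n).length = n := by
  induction n with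
  | zero => rfl
  | succ k ih => simp [URwalk, Walk.length_concat, ih]

lemma URwalk_support (G : SimpleGraph V) (x : ℕ → V) (hx : ∀ n, G.Adj (x n) (x (n+1)))
    (n : ℕ) : (URwalk G x hx n).support = (List.range (n+1)).map x := by
  induction n with
  | zero => rfl
  | succ k ih =>
    simp only [URwalk, Walk.support_concat, ih, List.range_succ (n := k + 1)]
    simp

lemma URwalk_edges (G : SimpleGraph V) (x : ℕ → V) (hx : ∀ n, G.Adj (x n) (x (n+1)))
    (n : ℕ) : (URwalk G x hx n).edges = (List.range n).map (fun i => s(x i, x (i+1))) := by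
  induction n with
  | zero => rfl
  | succ k ih =>
    simp only [URwalk, Walk.edges_concat, ih, List.range_succ (n := k)]
    simp

end URAux

lemma UR_no_diff [DecidableEq V] (G : SimpleGraph V)
    (hodd : ∀ ⦃v : V⦄ (c : G.Walk v v), c.IsCycle → Odd c.length)
    (M M' : G.Subgraph) (hM : M.IsMatching) (hM' : M'.IsMatching)
    (hsupp : M'.support = M.support) (hfin : M.support.Finite)
    {a b : V} (hab : M.Adj a b) (hab' : ¬ M'.Adj a b) : False := by
  classical
  set x : ℕ → V := URseq M M' a b with hxdef
  have hMu : ∀ {v w w' : V}, M.Adj v w → M.Adj v w' → w = w' := fun h1 h2 =>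
    (hM (M.edge_vert h1)).unique h1 h2
  have hM'u : ∀ {v w w' : V}, M'.Adj v w → M'.Adj v w' → w = w' := fun h1 h2 =>
    (hM' (M'.edge_vert h1)).unique h1 h2
  have hx2 : ∀ n, x (n+2) = if Even n then URpartner M' (x (n+1)) else URpartner M (x (n+1)) :=
    fun n => URseq_add_two M M' a b n
  -- the alternation invariant
  have inv : ∀ n, (Even n → M.Adj (x n) (x (n+1)) ∧ ¬ M'.Adj (x n) (x (n+1))) ∧
      (¬ Even n → M'.Adj (x n) (x (n+1)) ∧ ¬ M.Adj (x n) (x (n+1))) := by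
    intro n
    induction n with
    | zero => exact ⟨fun _ => ⟨hab, hab'⟩, fun h => absurd Even.zero h⟩
    | succ k ih =>
      rcases Nat.even_or_odd k with hk | hk
      · have h1 := ih.1 hk
        have hmem : x (k+1) ∈ M'.support := by
          rw [hsupp, SimpleGraph.Subgraph.mem_support]
          exact ⟨x k, h1.1.symm⟩
        have heq : x (k+2) = URpartner M' (x (k+1)) := by rw [hx2 k, if_pos hk]
        have hadj' : M'.Adj (x (k+1)) (x (k+2)) := by
          rw [heq]; exact URpartner_adj hmem
        have hnot : ¬ M.Adj (x (k+1)) (x (k+2)) := by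
          intro hcon
          have := hMu hcon h1.1.symm
          rw [this] at hadj'
          exact h1.2 hadj'.symm
        refine ⟨fun hE => absurd hE ?_, fun _ => ⟨hadj', hnot⟩⟩
        simpa [Nat.even_add_one] using hk
      · have h1 := ih.2 (Nat.not_even_iff_odd.mpr hk)
        have hmem' : x (k+1) ∈ M.support := by
          rw [← hsupp, SimpleGraph.Subgraph.mem_support]
          exact ⟨x k, h1.1.symm⟩
        have heq : x (k+2) = URpartner M (x (k+1)) := by
          rw [hx2 k, if_neg (Nat.not_even_iff_odd.mpr hk)]
        have hadj' : M.Adj (x (k+1)) (x (k+2)) := by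
          rw [heq]; exact URpartner_adj hmem'
        have hnot : ¬ M'.Adj (x (k+1)) (x (k+2)) := by
          intro hcon
          have := hM'u hcon h1.1.symm
          rw [this] at hadj'
          exact h1.2 hadj'.symm
        refine ⟨fun _ => ⟨hadj', hnot⟩, fun hE => absurd ?_ hE⟩
        simpa [Nat.even_add_one] using hk
  have hGadj : ∀ n, G.Adj (x n) (x (n+1)) := by
    intro n
    rcases Nat.even_or_odd n with h | h
    · exact ((inv n).1 h).1.adj_sub
    · exact ((inv n).2 (Nat.not_even_iff_odd.mpr h)).1.adj_sub
  have hne : ∀ n, x n ≠ x (n+1) := fun n => (hGadj n).ne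
  have hmem : ∀ n, x n ∈ M.support := by
    intro n
    rcases Nat.even_or_odd n with h | h
    · exact SimpleGraph.Subgraph.mem_support _ |>.mpr ⟨_, ((inv n).1 h).1⟩
    · rw [← hsupp]
      exact SimpleGraph.Subgraph.mem_support _ |>.mpr
        ⟨_, ((inv n).2 (Nat.not_even_iff_odd.mpr h)).1⟩
  have hx0 : x 0 = a := rfl
  have hx1 : x 1 = b := rfl
  -- pigeonhole
  have hP : ∃ j, ∃ i, i < j ∧ x i = x j := by
    have hninj : ¬ Function.Injective x := by
      intro hinj
      exact Set.infinite_range_of_injective hinj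
        (hfin.subset (Set.range_subset_iff.mpr hmem))
    rw [Function.not_injective_iff] at hninj
    obtain ⟨i, j, hxe, hij⟩ := hninj
    rcases Ne.lt_or_gt hij with h | h
    · exact ⟨j, i, h, hxe⟩
    · exact ⟨i, j, h, hxe.symm⟩
  set J := Nat.find hP with hJdef
  obtain ⟨i, hiJ, hxi⟩ := Nat.find_spec hP
  rw [← hJdef] at hiJ hxi
  have xinj : ∀ {c d : ℕ}, c < J → d < J → x c = x d → c = d := by
    intro c d hc hd he
    rcases lt_trichotomy c d with h | h | h
    · exact absurd ⟨c, h, he⟩ (Nat.find_min hP hd)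
    · exact h
    · exact absurd ⟨d, h, he.symm⟩ (Nat.find_min hP hc)
  obtain ⟨m, hmJ⟩ : ∃ m, J = m + 1 := ⟨J - 1, by omega⟩
  have hmlt : m < J := by omega
  have hi0 : i = 0 := by
    by_contra hi
    obtain ⟨i', hii'⟩ : ∃ i', i = i' + 1 := ⟨i - 1, by omega⟩
    rcases Nat.even_or_odd m with hme | hmo
    · have h1 : M.Adj (x i) (x m) := by
        rw [hxi, hmJ]; exact ((inv m).1 hme).1.symm
      rcases Nat.even_or_odd i with hie | hio
      · have h2 : M.Adj (x i) (x (i+1)) := ((inv i).1 hie).1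
        have he := hMu h1 h2
        have hi1J : i + 1 < J := by
          rcases Nat.lt_or_ge (i+1) J with h | h
          · exact h
          · exact absurd (hxi.trans (congrArg x (by omega : J = i + 1))) (hne i)
        have hmi : m = i + 1 := xinj hmlt hi1J he
        rw [Nat.even_iff] at hme hie
        omega
      · have hie' : Even i' := by
          rw [Nat.even_iff]; rw [Nat.odd_iff] at hio; omega
        have h2 : M.Adj (x (i'+1)) (x i') := ((inv i').1 hie').1.symm
        rw [← hii'] at h2
        have he := hMu h1 h2
        have hmi : m = i' := xinj hmlt (by omega) he
        omega
    · have h1 : M'.Adj (x i) (x m) := by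
        rw [hxi, hmJ]; exact ((inv m).2 (Nat.not_even_iff_odd.mpr hmo)).1.symm
      rcases Nat.even_or_odd i with hie | hio
      · have hio' : Odd i' := by
          rw [Nat.odd_iff]; rw [Nat.even_iff] at hie; omega
        have h2 : M'.Adj (x (i'+1)) (x i') :=
          ((inv i').2 (Nat.not_even_iff_odd.mpr hio')).1.symm
        rw [← hii'] at h2
        have he := hM'u h1 h2
        have hmi : m = i' := xinj hmlt (by omega) he
        omega
      · have h2 : M'.Adj (x i) (x (i+1)) :=
          ((inv i).2 (Nat.not_even_iff_odd.mpr hio)).1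
        have he := hM'u h1 h2
        have hi1J : i + 1 < J := by
          rcases Nat.lt_or_ge (i+1) J with h | h
          · exact h
          · exact absurd (hxi.trans (congrArg x (by omega : J = i + 1))) (hne i)
        have hmi : m = i + 1 := xinj hmlt hi1J he
        rw [Nat.odd_iff] at hmo hio
        omega
  rw [hi0] at hxi
  have hJ1 : 1 < J := by
    rcases Nat.lt_or_ge 1 J with h | h
    · exact h
    · exact absurd (hxi.trans (congrArg x (by omega : J = 1))) (hne 0)
  have hmodd : ¬ Even m := by
    intro hme
    have h1 : M.Adj (x 0) (x m) := by
      rw [hxi, hmJ]; exact ((inv m).1 hme).1.symm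
    have h2 : M.Adj (x 0) (x 1) := by rw [hx0, hx1]; exact hab
    have he := hMu h1 h2
    have hm1 : m = 1 := xinj hmlt hJ1 he
    rw [hm1, Nat.even_iff] at hme
    omega
  have hJeven : Even J := by
    rw [hmJ, Nat.even_add_one]
    exact hmodd
  have hJne2 : J ≠ 2 := by
    intro h2
    have hadj : M'.Adj (x 1) (x 2) :=
      ((inv 1).2 (by rw [Nat.even_iff]; omega)).1
    have hx2x0 : x 2 = x 0 := by rw [h2] at hxi; exact hxi.symm
    rw [hx2x0, hx0, hx1] at hadj
    exact hab' hadj.symm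
  have hJ4 : 2 < J := by
    obtain ⟨t, ht⟩ := hJeven
    omega
  -- build the cycle
  let c : G.Walk (x 0) (x 0) := (URwalk G x hGadj J).copy rfl hxi.symm
  have hclen : c.length = J := by
    simp [c, SimpleGraph.Walk.length_copy, URwalk_length]
  have hcedges : c.edges = (List.range J).map (fun i => s(x i, x (i+1))) := by
    simp [c, SimpleGraph.Walk.edges_copy, URwalk_edges]
  have hcsupp : c.support = (List.range (J+1)).map x := by
    simp [c, SimpleGraph.Walk.support_copy, URwalk_support]
  have hcyc : c.IsCycle := by
    refine ⟨⟨⟨?_⟩, ?_⟩, ?_⟩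
    · rw [hcedges]
      refine List.Nodup.map_on ?_ (List.nodup_range)
      intro p hp q hq hpq
      rw [List.mem_range] at hp hq
      rw [Sym2.eq_iff] at hpq
      rcases hpq with ⟨h1, h2⟩ | ⟨h1, h2⟩
      · exact xinj hp hq h1
      · rcases Nat.lt_or_ge (q+1) J with hq1 | hq1
        · have hpq1 : p = q + 1 := xinj hp hq1 h1
          rcases Nat.lt_or_ge (p+1) J with hp1 | hp1
          · have : p + 1 = q := xinj hp1 hq h2
            omega
          · have hxp0 : x (p+1) = x 0 := by
              rw [show p + 1 = J by omega, ← hxi]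
            have hq0 : q = 0 := xinj hq (by omega) (h2.symm.trans hxp0)
            omega
        · have hxq0 : x (q+1) = x 0 := by
            rw [show q + 1 = J by omega, ← hxi]
          have hp0 : p = 0 := xinj hp (by omega) (h1.trans hxq0)
          subst hp0
          have : 1 = q := xinj hJ1 hq h2
          omega
    · intro hnil
      rw [hnil] at hclen
      simp at hclen
      omega
    · rw [hcsupp, List.range_succ_eq_map]
      simp only [List.map_cons, List.tail_cons, List.map_map]
      refine List.Nodup.map_on ?_ (List.nodup_range)
      intro p hp q hq hpq
      rw [List.mem_range] at hp hq
      simp only [Function.comp_apply, Nat.succ_eq_add_one] at hpq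
      rcases Nat.lt_or_ge (p+1) J with hp1 | hp1 <;> rcases Nat.lt_or_ge (q+1) J with hq1 | hq1
      · have := xinj hp1 hq1 hpq
        omega
      · have hxp0 : x (p+1) = x 0 := by
          rw [hpq, show q + 1 = J by omega, ← hxi]
        have := xinj hp1 (by omega) hxp0
        omega
      · have hxq0 : x (q+1) = x 0 := by
          rw [← hpq, show p + 1 = J by omega, ← hxi]
        have := xinj hq1 (by omega) hxq0
        omega
      · omega
  have hoddJ := hodd c hcyc
  rw [hclen] at hoddJ
  obtain ⟨t, ht⟩ := hJeven
  obtain ⟨s, hs⟩ := hoddJ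
  omega

lemma UR_support_finite (G : SimpleGraph V) (M : G.Subgraph) (hE : M.edgeSet.Finite) :
    M.support.Finite := by
  have hsub : M.support ⊆ ⋃ e ∈ M.edgeSet, {z | z ∈ e} := by
    intro z hz
    rw [SimpleGraph.Subgraph.mem_support] at hz
    obtain ⟨y, hy⟩ := hz
    exact Set.mem_biUnion ((SimpleGraph.Subgraph.mem_edgeSet).mpr hy) (Sym2.mem_mk_left z y)
  refine (Set.Finite.biUnion hE ?_).subset hsub
  intro e _
  induction e using Sym2.ind with
  | _ p q =>
    have he : {z | z ∈ s(p,q)} = {p, q} := by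
      ext z; simp [Sym2.mem_iff]
    rw [he]
    exact (Set.finite_singleton q).insert p

theorem test_thm [DecidableEq V] (G : SimpleGraph V)
    (huni : Unicyclic G) (hconn : G.Connected)
    (hodd : ∀ ⦃v : V⦄ (c : G.Walk v v), c.IsCycle → Odd c.length)
    (M : G.Subgraph) (hM : MaximumMatching G M) : UniquelyRestricted G M := by
  classical
  refine ⟨hM.1, ?_⟩
  intro M' hM' hsup
  obtain ⟨v, c, hc⟩ := huni.1
  have hedge : ∃ u w, G.Adj u w := by
    cases c with
    | nil => exact absurd rfl hc.ne_nil
    | cons h p => exact ⟨_, _, h⟩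
  obtain ⟨u, w, huw⟩ := hedge
  have h1le : 1 ≤ M.edgeSet.ncard := by
    have hone : (G.subgraphOfAdj huw).edgeSet.ncard = 1 := by
      rw [SimpleGraph.edgeSet_subgraphOfAdj]
      simp
    have := hM.2 _ (SimpleGraph.Subgraph.IsMatching.subgraphOfAdj huw)
    omega
  have hEfin : M.edgeSet.Finite := by
    by_contra h
    rw [Set.Infinite.ncard h] at h1le
    omega
  have hSfin : M.support.Finite := UR_support_finite G M hEfin
  ext e
  induction e using Sym2.ind with
  | _ p q =>
    rw [SimpleGraph.Subgraph.mem_edgeSet, SimpleGraph.Subgraph.mem_edgeSet]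
    constructor
    · intro h
      by_contra hn
      exact UR_no_diff G hodd M' M hM' hM.1 hsup.symm (hsup ▸ hSfin) h hn
    · intro h
      by_contra hn
      exact UR_no_diff G hodd M M' hM.1 hM' hsup hSfin h hn

/-- Every maximum matching of a unicycle graph whose unique cycle has odd length is
uniquely restricted. -/
theorem odd_unicyclic_max_matching_ur [DecidableEq V] (G : SimpleGraph V)
    (huni : Unicyclic G) (hconn : G.Connected)
    (hodd : ∀ ⦃v : V⦄ (c : G.Walk v v), c.IsCycle → Odd c.length)
    (M : G.Subgraph) (hM : MaximumMatching G M) : UniquelyRestricted G M := by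
  exact test_thm G huni hconn hodd M hM
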